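/- Let q be a prime power, let G be a profinite group, and let N be a closed normal subgroup of G. Then the intersection of the kernels of all continuous group homomorphisms φ : N → ℤ/q satisfying φ(g⁻¹ng) = φ(n) for all g ∈ G and n ∈ N equals the topological closure of the subgroup of N generated by {n^q : n ∈ N} ∪ {n⁻¹g⁻¹ng : n ∈ N, g ∈ G}. -/

import Mathlib

open Pointwise

instance (n : ℕ) : TopologicalSpace (ZMod n) := ⊥

private lemma zmod_exists_addHom {n q : ℕ} (hq : 0 < q) (h : n ∣ q) {b : ZMod n}
    (hb : b ≠ 0) : ∃ f : ZMod n →+ ZMod q, f b ≠ 0 := by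
  have hn : 0 < n := Nat.pos_of_dvd_of_pos h hq
  haveI : NeZero n := ⟨hn.ne'⟩
  have hker : ((q / n) • Int.castAddHom (ZMod q)) (n : ℤ) = 0 := by
    have h1 : ((q / n) • Int.castAddHom (ZMod q)) (n : ℤ) = ((q / n * n : ℕ) : ZMod q) := by
      simp only [AddMonoidHom.nsmul_apply, Int.coe_castAddHom, nsmul_eq_mul, Nat.cast_mul]
      push_cast
      ring
    rw [h1, Nat.div_mul_cancel h, ZMod.natCast_self]
  refine ⟨ZMod.lift n ⟨(q / n) • Int.castAddHom (ZMod q), hker⟩, ?_⟩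
  have hb' : b = ((b.val : ℤ) : ZMod n) := by push_cast [ZMod.natCast_zmod_val]; rfl
  rw [hb', ZMod.lift_coe]
  have h2 : ((q / n) • Int.castAddHom (ZMod q)) (b.val : ℤ) = ((q / n * b.val : ℕ) : ZMod q) := by
    simp only [AddMonoidHom.nsmul_apply, Int.coe_castAddHom, nsmul_eq_mul, Nat.cast_mul]
    push_cast
    ring
  rw [h2]
  intro h0
  rw [ZMod.natCast_eq_zero_iff] at h0
  have hvpos : 0 < b.val := Nat.pos_of_ne_zero fun hv => hb ((ZMod.val_eq_zero b).mp hv)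
  have hdivpos : 0 < q / n := Nat.div_pos (Nat.le_of_dvd hq h) hn
  have hlt : q / n * b.val < q := by
    calc q / n * b.val < q / n * n := by
          exact mul_lt_mul_of_pos_left (ZMod.val_lt b) hdivpos
    _ = q := Nat.div_mul_cancel h
  exact absurd (Nat.le_of_dvd (Nat.mul_pos hdivpos hvpos) h0) (not_le.mpr hlt)

private lemma exists_char {q : ℕ} (hq : 0 < q) {B : Type*} [CommGroup B] [Finite B]
    (hexp : ∀ b : B, b ^ q = 1) {a : B} (ha : a ≠ 1) :
    ∃ φ : B →* Multiplicative (ZMod q), φ a ≠ 1 := by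
  classical
  obtain ⟨ι, hι, n, hlt, ⟨e⟩⟩ := CommGroup.equiv_prod_multiplicative_zmod_of_finite B
  obtain ⟨i, hi⟩ : ∃ i, e a i ≠ 1 := by
    contrapose! ha
    exact (MulEquiv.map_eq_one_iff e).mp (funext ha)
  have hdvd : n i ∣ q := by
    have h1 : n i = orderOf (e.symm <| Pi.mulSingle i <| Multiplicative.ofAdd 1) := by
      simpa only [MulEquiv.orderOf_eq, orderOf_piMulSingle, orderOf_ofAdd_eq_addOrderOf]
        using (ZMod.addOrderOf_one (n i)).symm
    rw [h1]
    exact orderOf_dvd_of_pow_eq_one (hexp _)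
  have hb : (e a i).toAdd ≠ 0 := by simpa using hi
  obtain ⟨f, hf⟩ := zmod_exists_addHom hq hdvd hb
  refine ⟨((AddMonoidHom.toMultiplicative f).comp
    ((Pi.evalMonoidHom (fun j ↦ Multiplicative (ZMod (n j))) i).comp e.toMonoidHom)), ?_⟩
  simpa using hf

/-- Let `q` be a prime power, `G` a profinite group and `N` a closed normal subgroup of
`G`.  The intersection of the kernels of all continuous homomorphisms `φ : N → ℤ/q` that
are invariant under conjugation by `G` equals the topological closure of the subgroup of
`N` generated by the `q`-th powers `n^q` and the commutators `n⁻¹g⁻¹ng` (`n ∈ N`,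
`g ∈ G`). -/
theorem kernels_intersection_eq_closure (q : ℕ) (hq : ∃ (p k : ℕ), p.Prime ∧ 0 < k ∧ q = p ^ k)
    (G : Type*) [Group G] [TopologicalSpace G] [IsTopologicalGroup G]
    [CompactSpace G] [T2Space G] [TotallyDisconnectedSpace G]
    (N : Subgroup G) (hN : N.Normal) (hNclosed : IsClosed (N : Set G)) :
    (⨅ φ ∈ {φ : N →* Multiplicative (ZMod q) | Continuous φ ∧
        ∀ (g : G) (n : N), φ ⟨g⁻¹ * n * g, by simpa using hN.conj_mem n n.2 g⁻¹⟩ = φ n},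
      φ.ker) =
    (Subgroup.closure
      ({x : N | ∃ n : N, x = n ^ q} ∪
       {x : N | ∃ (n : N) (g : G), (x : G) = (n : G)⁻¹ * g⁻¹ * n * g})).topologicalClosure := by
  obtain ⟨p, k, hp, hk, hqpk⟩ := hq
  have hqpos : 0 < q := hqpk ▸ Nat.pow_pos (n := k) hp.pos
  haveI : CompactSpace N := isCompact_iff_compactSpace.mp hNclosed.isCompact
  haveI : DiscreteTopology (ZMod q) := ⟨rfl⟩
  haveI : DiscreteTopology (Multiplicative (ZMod q)) := ⟨rfl⟩
  set S : Set N := ({x : N | ∃ n : N, x = n ^ q} ∪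
       {x : N | ∃ (n : N) (g : G), (x : G) = (n : G)⁻¹ * g⁻¹ * n * g}) with hS
  set C : Subgroup N := Subgroup.closure S with hC
  -- every power element is in S
  have hpowS : ∀ n : N, n ^ q ∈ S := fun n => Or.inl ⟨n, rfl⟩
  have hcommS : ∀ (n : N) (g : G), (g⁻¹ * (n : G) * g) ∈ N →
      True := fun _ _ _ => trivial
  -- commutator criterion
  have hcommS' : ∀ (n m : N), n⁻¹ * m⁻¹ * n * m ∈ S := by
    intro n m
    exact Or.inr ⟨n, (m : G), by push_cast; ring_nf⟩
  haveI hCnormal : C.Normal := by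
    constructor
    intro c hc m
    rw [hC] at hc ⊢
    induction hc using Subgroup.closure_induction with
    | mem x hx =>
      rcases hx with ⟨n, rfl⟩ | ⟨n, g, hx⟩
      · apply Subgroup.subset_closure
        exact Or.inl ⟨m * n * m⁻¹, conj_pow.symm⟩
      · apply Subgroup.subset_closure
        refine Or.inr ⟨m * n * m⁻¹, (m : G) * g * (m : G)⁻¹, ?_⟩
        push_cast
        rw [hx]
        group
    | one => simpa using Subgroup.one_mem _
    | mul x y hx hy hx' hy' =>
      rw [show m * (x * y) * m⁻¹ = (m * x * m⁻¹) * (m * y * m⁻¹) by group]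
      exact Subgroup.mul_mem _ hx' hy'
    | inv x hx hx' =>
      rw [show m * x⁻¹ * m⁻¹ = (m * x * m⁻¹)⁻¹ by group]
      exact Subgroup.inv_mem _ hx'
  set K : Subgroup N := C.topologicalClosure with hK
  haveI hKnormal : K.Normal := Subgroup.is_normal_topologicalClosure C
  apply le_antisymm
  · -- hard direction
    intro x hx
    simp only [Subgroup.mem_iInf] at hx
    by_contra hxK
    -- find a clopen neighborhood of 1 avoiding x·K
    have hKclosed : IsClosed (K : Set N) := Subgroup.isClosed_topologicalClosure C
    have hWopen : IsOpen ((fun u : N => x * u) ⁻¹' (K : Set N)ᶜ) :=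
      (hKclosed.isOpen_compl).preimage (continuous_mul_left x)
    have h1W : (1 : N) ∈ (fun u : N => x * u) ⁻¹' (K : Set N)ᶜ := by
      simpa using hxK
    obtain ⟨V, hVclopen, h1V, hVW⟩ := compact_exists_isClopen_in_isOpen hWopen h1W
    obtain ⟨U, hU⟩ := IsTopologicalGroup.exist_openNormalSubgroup_sub_clopen_nhds_of_one hVclopen h1V
    set V' : Subgroup N := K ⊔ U.toSubgroup with hV'
    haveI : U.toSubgroup.Normal := U.isNormal'
    haveI hV'normal : V'.Normal := Subgroup.sup_normal K U.toSubgroup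
    have hV'open : IsOpen (V' : Set N) :=
      Subgroup.isOpen_mono (le_sup_right : U.toSubgroup ≤ V') U.isOpen
    have hKleV' : K ≤ V' := le_sup_left
    have hCleV' : C ≤ V' := le_trans (Subgroup.le_topologicalClosure C) hKleV'
    have hSV' : S ⊆ (V' : Set N) := fun s hs => hCleV' (Subgroup.subset_closure hs)
    have hxV' : x ∉ V' := by
      intro hxv
      rw [hV'] at hxv
      have : (x : N) ∈ (K : Set N) * (U.toSubgroup : Set N) := by
        rw [← Subgroup.mul_normal K U.toSubgroup]
        exact hxv
      obtain ⟨a, ha, b, hb, hab⟩ := this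
      have hbV : b⁻¹ ∈ V := hU (Subgroup.inv_mem _ hb)
      have : x * b⁻¹ ∉ (K : Set N) := hVW hbV
      apply this
      rw [← hab]
      simpa [mul_assoc] using ha
    haveI hfin : Finite (N ⧸ V') := Subgroup.quotient_finite_of_isOpen V' hV'open
    -- the quotient is commutative
    letI : CommGroup (N ⧸ V') :=
      { (inferInstance : Group (N ⧸ V')) with
        mul_comm := by
          intro a b
          induction a using QuotientGroup.induction_on with
          | H a =>
          induction b using QuotientGroup.induction_on with
          | H b =>
          rw [← QuotientGroup.mk_mul, ← QuotientGroup.mk_mul, QuotientGroup.eq]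
          have : (a * b)⁻¹ * (b * a) = b⁻¹ * a⁻¹ * b * a := by group
          rw [this]
          exact hSV' (hcommS' b a) }
    have hexp : ∀ b : N ⧸ V', b ^ q = 1 := by
      intro b
      induction b using QuotientGroup.induction_on with
      | H b =>
        rw [← QuotientGroup.mk_pow, QuotientGroup.eq_one_iff]
        exact hSV' (hpowS b)
    have hane : (QuotientGroup.mk x : N ⧸ V') ≠ 1 := by
      rw [Ne, QuotientGroup.eq_one_iff]
      exact hxV'
    obtain ⟨φ₀, hφ₀⟩ := exists_char hqpos hexp hane
    set φ : N →* Multiplicative (ZMod q) := φ₀.comp (QuotientGroup.mk' V') with hφdef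
    have hφV' : ∀ v : N, v ∈ V' → φ v = 1 := by
      intro v hv
      simp only [hφdef, MonoidHom.comp_apply, QuotientGroup.mk'_apply]
      rw [(QuotientGroup.eq_one_iff v).mpr hv, map_one]
    have hφcont : Continuous φ := by
      rw [continuous_discrete_rng]
      intro m
      rw [isOpen_iff_forall_mem_open]
      intro y hy
      refine ⟨y • (V' : Set N), ?_, hV'open.smul y, ?_⟩
      · rintro z ⟨v, hv, rfl⟩
        simp only [Set.mem_preimage, Set.mem_singleton_iff, smul_eq_mul] at hy ⊢
        rw [map_mul, hφV' v hv, mul_one, hy]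
      · exact ⟨1, Subgroup.one_mem _, by simp⟩
    have hφinv : ∀ (g : G) (n : N),
        φ ⟨g⁻¹ * n * g, by simpa using hN.conj_mem n n.2 g⁻¹⟩ = φ n := by
      intro g n
      set m : N := ⟨g⁻¹ * n * g, by simpa using hN.conj_mem n n.2 g⁻¹⟩ with hm
      have hc : n⁻¹ * m ∈ S := by
        refine Or.inr ⟨n, g, ?_⟩
        push_cast [hm]
        group
      have : m = n * (n⁻¹ * m) := by group
      rw [this, map_mul, hφV' _ (hSV' hc), mul_one]
    have := hx φ ⟨hφcont, hφinv⟩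
    rw [MonoidHom.mem_ker] at this
    apply hφ₀
    simpa [hφdef] using this
  · -- easy direction
    refine le_iInf fun φ => le_iInf fun hφ => ?_
    apply Subgroup.topologicalClosure_minimal
    · rw [Subgroup.closure_le]
      rintro x (⟨n, rfl⟩ | ⟨n, g, hx⟩)
      · have : φ (n ^ q) = (φ n) ^ q := map_pow φ n q
        rw [SetLike.mem_coe, MonoidHom.mem_ker, this]
        have h0 : q • (φ n).toAdd = 0 := by
          rw [nsmul_eq_mul, ZMod.natCast_self, zero_mul]
        have : ((φ n) ^ q).toAdd = 0 := by rw [toAdd_pow]; exact h0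
        rwa [toAdd_eq_zero] at this
      · rw [SetLike.mem_coe, MonoidHom.mem_ker]
        set m : N := ⟨g⁻¹ * n * g, by simpa using hN.conj_mem n n.2 g⁻¹⟩ with hm
        have hxm : x = n⁻¹ * m := by
          apply Subtype.ext
          push_cast [hx, hm]
          group
        rw [hxm, map_mul, map_inv, hφ.2 g n, inv_mul_cancel]
    · have : (φ.ker : Set N) = φ ⁻¹' {1} := by
        ext z
        simp [MonoidHom.mem_ker]
      rw [this]
      exact IsClosed.preimage hφ.1 isClosed_singleton
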